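/- Let F be a field, ι an index set, z a natural number, and v : ι → F^C a family of vectors such that every subfamily indexed by a finite set of at most 2z indices is linearly independent. Let S ⊆ ι be a finite set with |S| ≤ z and let w ∈ span{v_e : e ∈ S}. If T ⊆ ι is a finite set of minimum cardinality among all finite sets T' ⊆ ι satisfying w ∈ span{v_e : e ∈ T'}, then T ⊆ S. -/

import Mathlib

/-- If every subfamily of at most `2z` of the vectors `v_e` is
linearly independent, `S` is finite with `|S| ≤ z`, `w ∈ span {v_e : e ∈ S}`,
and `T` has minimum cardinality among all finite sets `T'` with
`w ∈ span {v_e : e ∈ T'}`, then `T ⊆ S`. -/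
theorem stmt5 {F ι : Type*} [Field F] {C z : ℕ}
    (v : ι → (Fin C → F))
    (hind : ∀ s : Finset ι, s.card ≤ 2 * z →
      LinearIndependent F (fun i : s => v i.1))
    (S : Finset ι) (hS : S.card ≤ z)
    (w : Fin C → F) (hw : w ∈ Submodule.span F (v '' ↑S))
    (T : Finset ι) (hT : w ∈ Submodule.span F (v '' ↑T))
    (hmin : ∀ T' : Finset ι, w ∈ Submodule.span F (v '' ↑T') → T.card ≤ T'.card) :
    T ⊆ S := by
  classical
  have hTcard : T.card ≤ z := le_trans (hmin S hw) hS
  set U : Finset ι := S ∪ T with hU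
  have hUcard : U.card ≤ 2 * z := by
    calc U.card ≤ S.card + T.card := Finset.card_union_le _ _
    _ ≤ 2 * z := by omega
  have li : LinearIndependent F (fun i : (↑U : Set ι) => v i.1) := hind U hUcard
  -- spans of disjoint subfamilies of U are disjoint
  have hdisj : Disjoint (Submodule.span F (v '' ↑S))
      (Submodule.span F (v '' ↑(T \ S))) := by
    have h := li.disjoint_span_image (s := Subtype.val ⁻¹' (↑S : Set ι))
      (t := Subtype.val ⁻¹' (↑(T \ S) : Set ι)) ?_
    · have h1 : (fun i : (↑U : Set ι) => v i.1) '' (Subtype.val ⁻¹' (↑S : Set ι))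
          = v '' ↑S := by
        rw [show (fun i : (↑U : Set ι) => v i.1) = v ∘ Subtype.val from rfl,
          Set.image_comp, Set.image_preimage_eq_inter_range, Subtype.range_coe,
          Set.inter_eq_left.mpr]
        intro x hx
        simp only [hU, Finset.coe_union, Set.mem_union]
        exact Or.inl hx
      have h2 : (fun i : (↑U : Set ι) => v i.1) '' (Subtype.val ⁻¹' (↑(T \ S) : Set ι))
          = v '' ↑(T \ S) := by
        rw [show (fun i : (↑U : Set ι) => v i.1) = v ∘ Subtype.val from rfl,
          Set.image_comp, Set.image_preimage_eq_inter_range, Subtype.range_coe,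
          Set.inter_eq_left.mpr]
        intro x hx
        simp only [Finset.coe_sdiff, Set.mem_diff] at hx
        simp only [hU, Finset.coe_union, Set.mem_union]
        exact Or.inr hx.1
      rwa [h1, h2] at h
    · rw [Set.disjoint_iff_inter_eq_empty, ← Set.preimage_inter]
      have : (↑S : Set ι) ∩ ↑(T \ S) = ∅ := by
        simp only [Finset.coe_sdiff]
        rw [Set.inter_diff_self]
      rw [this, Set.preimage_empty]
  -- decompose w over T = (T ∩ S) ∪ (T \ S)
  have hTsplit : (↑T : Set ι) = ↑(T ∩ S) ∪ ↑(T \ S) := by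
    simp only [Finset.coe_inter, Finset.coe_sdiff]
    rw [Set.inter_union_diff]
  have hw' : w ∈ Submodule.span F (v '' ↑(T ∩ S)) ⊔ Submodule.span F (v '' ↑(T \ S)) := by
    rw [← Submodule.span_union, ← Set.image_union, ← hTsplit]
    exact hT
  obtain ⟨a, ha, b, hb, hab⟩ := Submodule.mem_sup.mp hw'
  have hbS : b ∈ Submodule.span F (v '' ↑S) := by
    have haS : a ∈ Submodule.span F (v '' ↑S) :=
      Submodule.span_mono (Set.image_mono (by
        simp only [Finset.coe_inter]; exact Set.inter_subset_right)) ha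
    have : b = w - a := by rw [← hab]; ring
    rw [this]
    exact Submodule.sub_mem _ hw haS
  have hb0 : b = 0 := Submodule.disjoint_def.mp hdisj b hbS hb
  have hwTS : w ∈ Submodule.span F (v '' ↑(T ∩ S)) := by
    rw [← hab, hb0, add_zero]; exact ha
  have hcard : T.card ≤ (T ∩ S).card := hmin _ hwTS
  have : T ∩ S = T :=
    Finset.eq_of_subset_of_card_le (Finset.inter_subset_left) hcard
  intro x hx
  rw [← this] at hx
  exact (Finset.mem_inter.mp hx).2
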